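/- Let A be a Hurwitz d×d real matrix and x₀ ∈ ℝ^d, x₀ ≠ 0. The set of cut tail points of the trajectory x(t) = e^{tA}x₀ is exactly the open half-line (T_cut(x₀), +∞): a number T > 0 is a cut tail point if and only if T > T_cut(x₀). -/

import Mathlib

open Matrix Set Filter Topology

noncomputable section

/-- A real square matrix is *Hurwitz* if all its (complex) eigenvalues,
i.e. the roots of its characteristic polynomial over `ℂ`, have negative real part. -/
def IsHurwitz {d : ℕ} (A : Matrix (Fin d) (Fin d) ℝ) : Prop :=
  ∀ μ : ℂ, (A.map (algebraMap ℝ ℂ)).charpoly.IsRoot μ → μ.re < 0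

/-- The trajectory `x(t) = e^{tA} x₀` of the linear system `ẋ = Ax`. -/
def traj {d : ℕ} (A : Matrix (Fin d) (Fin d) ℝ) (x₀ : Fin d → ℝ) (t : ℝ) : Fin d → ℝ :=
  (NormedSpace.exp (t • A)).mulVec x₀

/-- Symmetrized convex hull `co_s X = co (X ∪ (−X))`. -/
def symCo {d : ℕ} (X : Set (Fin d → ℝ)) : Set (Fin d → ℝ) :=
  convexHull ℝ (X ∪ (-X))

/-- `G = co_s {x(t) : t ≥ 0}`, the symmetrized convex hull of the whole trajectory. -/
def trajHull {d : ℕ} (A : Matrix (Fin d) (Fin d) ℝ) (x₀ : Fin d → ℝ) : Set (Fin d → ℝ) :=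
  symCo (traj A x₀ '' Ici (0:ℝ))

/-- `T > 0` is a *cut tail point* of the trajectory starting at `x₀` if `x(t)` lies in the
relative (intrinsic) interior of `G` for every `t ≥ T`. -/
def IsCutTailPoint {d : ℕ} (A : Matrix (Fin d) (Fin d) ℝ) (x₀ : Fin d → ℝ) (T : ℝ) : Prop :=
  0 < T ∧ ∀ t, T ≤ t → traj A x₀ t ∈ intrinsicInterior ℝ (trajHull A x₀)

/-- `T_cut(x₀)`: the infimum of all cut tail points of the trajectory starting at `x₀`. -/
def Tcut {d : ℕ} (A : Matrix (Fin d) (Fin d) ℝ) (x₀ : Fin d → ℝ) : ℝ :=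
  sInf {T | IsCutTailPoint A x₀ T}

/-- `L_{x₀}`: the minimal `A`-invariant linear subspace of `ℝ^d` containing `x₀`. -/
def minInv {d : ℕ} (A : Matrix (Fin d) (Fin d) ℝ) (x₀ : Fin d → ℝ) : Submodule ℝ (Fin d → ℝ) :=
  sInf {L | x₀ ∈ L ∧ ∀ v ∈ L, A.mulVec v ∈ L}

/-- A point `x₀` is *generic* if `dim L_{x₀}` equals the degree of the minimal polynomial of `A`. -/
def IsGeneric {d : ℕ} (A : Matrix (Fin d) (Fin d) ℝ) (x₀ : Fin d → ℝ) : Prop :=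
  Module.finrank ℝ (minInv A x₀) = (minpoly ℝ A).natDegree


section Aux

set_option linter.unusedSectionVars false

-- ### Geometry of the intrinsic interior
variable {E : Type*} [NormedAddCommGroup E] [NormedSpace ℝ E] [FiniteDimensional ℝ E]


variable {E : Type*} [NormedAddCommGroup E] [NormedSpace ℝ E] [FiniteDimensional ℝ E]

/-- Characterization of the intrinsic interior via open sets. -/
theorem mem_intrinsicInterior_iff_open {s : Set E} {x : E} :
    x ∈ intrinsicInterior ℝ s ↔
      x ∈ affineSpan ℝ s ∧
        ∃ V : Set E, IsOpen V ∧ x ∈ V ∧ V ∩ (affineSpan ℝ s : Set E) ⊆ s := by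
  constructor
  · intro h
    obtain ⟨y, hy, rfl⟩ := h
    refine ⟨y.2, ?_⟩
    obtain ⟨V, hV, hVeq⟩ := isOpen_induced_iff.mp (isOpen_interior
      (s := ((↑) ⁻¹' s : Set (affineSpan ℝ s))))
    refine ⟨V, hV, ?_, ?_⟩
    · have : y ∈ ((↑) ⁻¹' V : Set (affineSpan ℝ s)) := hVeq ▸ hy
      exact this
    · rintro z ⟨hzV, hzS⟩
      have : (⟨z, hzS⟩ : affineSpan ℝ s) ∈ interior ((↑) ⁻¹' s : Set (affineSpan ℝ s)) :=
        hVeq ▸ hzV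
      have h2 : (⟨z, hzS⟩ : affineSpan ℝ s) ∈ ((↑) ⁻¹' s : Set (affineSpan ℝ s)) :=
        interior_subset this
      exact h2
  · rintro ⟨hxS, V, hV, hxV, hVs⟩
    refine ⟨⟨x, hxS⟩, ?_, rfl⟩
    apply interior_maximal (t := ((↑) ⁻¹' V : Set (affineSpan ℝ s)))
    · rintro ⟨z, hzS⟩ hzV
      exact hVs ⟨hzV, hzS⟩
    · exact hV.preimage continuous_subtype_val
    · exact hxV

theorem zero_mem_intrinsicInterior {s : Set E} (hconv : Convex ℝ s)
    (hsym : ∀ y ∈ s, -y ∈ s) (h0 : (0 : E) ∈ s) :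
    (0 : E) ∈ intrinsicInterior ℝ s := by
  obtain ⟨y, hy⟩ := Set.Nonempty.intrinsicInterior hconv ⟨0, h0⟩
  have hys : y ∈ s := intrinsicInterior_subset hy
  have hySpan : y ∈ affineSpan ℝ s := subset_affineSpan ℝ s hys
  have h0Span : (0 : E) ∈ affineSpan ℝ s := subset_affineSpan ℝ s h0
  obtain ⟨-, V, hV, hyV, hVs⟩ := mem_intrinsicInterior_iff_open.mp hy
  rw [mem_intrinsicInterior_iff_open]
  refine ⟨h0Span, {z | y + z ∈ V} ∩ {z | y - z ∈ V}, ?_, ?_, ?_⟩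
  · exact (hV.preimage (by continuity)).inter (hV.preimage (by continuity))
  · simp [hyV]
  · rintro z ⟨⟨hz1, hz2⟩, hzS⟩
    have hu : y + z ∈ s := by
      refine hVs ⟨hz1, ?_⟩
      have := AffineSubspace.smul_vsub_vadd_mem (affineSpan ℝ s) (1 : ℝ) hzS h0Span hySpan
      simpa [vsub_eq_sub, vadd_eq_add, add_comm] using this
    have hw' : y - z ∈ s := by
      refine hVs ⟨hz2, ?_⟩
      have := AffineSubspace.smul_vsub_vadd_mem (affineSpan ℝ s) (-1 : ℝ) hzS h0Span hySpan
      simpa [vsub_eq_sub, vadd_eq_add, sub_eq_add_neg, add_comm] using this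
    have hw : z - y ∈ s := by
      have := hsym _ hw'
      simpa using this
    have := hconv hu hw (by norm_num : (0:ℝ) ≤ (1/2:ℝ)) (by norm_num : (0:ℝ) ≤ (1/2:ℝ))
      (by norm_num)
    have heq : (1 / 2 : ℝ) • (y + z) + (1 / 2 : ℝ) • (z - y) = z := by
      rw [smul_add, smul_sub]; module
    rwa [heq] at this

theorem eventually_mem_intrinsicInterior {α : Type*} {s : Set E} {f : α → E} {l : Filter α}
    {y : E} (hy : y ∈ intrinsicInterior ℝ s) (hf : Tendsto f l (𝓝 y))
    (hmem : ∀ᶠ a in l, f a ∈ affineSpan ℝ s) :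
    ∀ᶠ a in l, f a ∈ intrinsicInterior ℝ s := by
  obtain ⟨-, V, hV, hyV, hVs⟩ := mem_intrinsicInterior_iff_open.mp hy
  filter_upwards [hf.eventually (hV.mem_nhds hyV), hmem] with a haV haS
  exact mem_intrinsicInterior_iff_open.mpr ⟨haS, V, hV, haV, hVs⟩


section Decay

attribute [local instance] Matrix.linftyOpNormedAddCommGroup Matrix.linftyOpNormedRing
  Matrix.linftyOpNormedAlgebra

open NormedSpace

variable {d : ℕ}


/-- `M ↦ M.mulVec v` as a linear map. -/
def mulVecRight {R : Type*} [CommRing R] (v : Fin d → R) :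
    Matrix (Fin d) (Fin d) R →ₗ[R] (Fin d → R) where
  toFun M := M.mulVec v
  map_add' M N := Matrix.add_mulVec M N v
  map_smul' c M := Matrix.smul_mulVec c M v

theorem decay_complex (B : Matrix (Fin d) (Fin d) ℂ)
    (hB : ∀ μ : ℂ, B.charpoly.IsRoot μ → μ.re < 0) (z : Fin d → ℂ) :
    Tendsto (fun t : ℝ => (exp (t • B)).mulVec z) atTop (𝓝 0) := by
  set g : Module.End ℂ (Fin d → ℂ) := Matrix.toLinAlgEquiv' B with hg
  -- the set of good vectors is a submodule
  let W : Submodule ℂ (Fin d → ℂ) :=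
    { carrier := {v | Tendsto (fun t : ℝ => (exp (t • B)).mulVec v) atTop (𝓝 0)}
      add_mem' := by
        intro a b ha hb
        have := ha.add hb
        simpa [Matrix.mulVec_add] using this
      zero_mem' := by simp [Matrix.mulVec_zero, tendsto_const_nhds]
      smul_mem' := by
        intro c v hv
        have := hv.const_smul c
        simpa [Matrix.mulVec_smul] using this }
  suffices hW : ∀ μ, g.maxGenEigenspace μ ≤ W by
    have htop := Module.End.iSup_maxGenEigenspace_eq_top g
    have : (⊤ : Submodule ℂ (Fin d → ℂ)) ≤ W := by
      rw [← htop]; exact iSup_le hW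
    exact this (Submodule.mem_top) 
  intro μ
  by_cases hbot : g.maxGenEigenspace μ = ⊥
  · rw [hbot]; exact bot_le
  -- μ is an eigenvalue, hence Re μ < 0
  have hev : g.HasEigenvalue μ := by
    have h1 : g.HasUnifEigenvalue μ ⊤ := hbot
    exact h1.lt zero_lt_one
  have hroot : (minpoly ℂ B).IsRoot μ := by
    have := (Module.End.hasEigenvalue_iff_isRoot).mp hev
    rwa [hg, minpoly.algEquiv_eq] at this
  have hre : μ.re < 0 := hB μ (hroot.dvd (Matrix.minpoly_dvd_charpoly B))
  -- now the decay on the generalized eigenspace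
  intro v hv
  obtain ⟨k, hk⟩ := (Module.End.mem_maxGenEigenspace g μ v).mp hv
  set N : Matrix (Fin d) (Fin d) ℂ := B - μ • 1 with hN
  have hNpow : ∀ n : ℕ, (N ^ n).mulVec v = (((g - μ • 1) ^ n) v) := by
    intro n
    have : Matrix.toLinAlgEquiv' (N ^ n) = (g - μ • 1) ^ n := by
      rw [map_pow, hN, map_sub, _root_.map_smul, _root_.map_one]
    calc (N ^ n).mulVec v = Matrix.toLinAlgEquiv' (N ^ n) v := rfl
      _ = ((g - μ • 1) ^ n) v := by rw [this]
  have hNzero : ∀ n : ℕ, k ≤ n → (N ^ n).mulVec v = 0 := by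
    intro n hn
    rw [hNpow]
    have : (g - μ • 1) ^ n = (g - μ • 1) ^ (n - k) * (g - μ • 1) ^ k := by
      rw [← pow_add]; congr 1; omega
    rw [this]
    simp [Module.End.mul_apply, hk]
  -- key formula
  have key : ∀ t : ℝ, (exp (t • B)).mulVec v =
      ∑ n ∈ Finset.range k,
        Complex.exp ((t : ℂ) * μ) • ((t ^ n : ℝ) • ((n.factorial : ℂ)⁻¹ • (N ^ n).mulVec v)) := by
    intro t
    have h0 : t • (μ • (1 : Matrix (Fin d) (Fin d) ℂ)) = ((t : ℂ) * μ) • 1 := by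
      rw [← smul_assoc, Complex.real_smul]
    have hsplit : t • B = ((t : ℂ) * μ) • (1 : Matrix (Fin d) (Fin d) ℂ) + t • N := by
      rw [hN, smul_sub, ← h0]
      abel
    have hcomm : Commute (((t : ℂ) * μ) • (1 : Matrix (Fin d) (Fin d) ℂ)) (t • N) :=
      (Commute.one_left _).smul_left _
    rw [hsplit]
    rw [exp_add_of_commute _ _ hcomm]
    have h1 : exp (((t : ℂ) * μ) • (1 : Matrix (Fin d) (Fin d) ℂ))
        = Complex.exp ((t : ℂ) * μ) • (1 : Matrix (Fin d) (Fin d) ℂ) := by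
      have h := algebraMap_exp_comm (𝕂 := ℂ) (𝔸 := Matrix (Fin d) (Fin d) ℂ) ((t : ℂ) * μ)
      rw [Algebra.algebraMap_eq_smul_one, Algebra.algebraMap_eq_smul_one] at h
      rw [Complex.exp_eq_exp_ℂ]
      exact h.symm
    rw [h1, smul_mul_assoc, one_mul, Matrix.smul_mulVec]
    -- (exp (t • N)).mulVec v = ∑ ...
    have hsum : (exp (t • N)).mulVec v
        = ∑' n : ℕ, (n.factorial : ℂ)⁻¹ • ((t • N) ^ n).mulVec v := by
      have hsummable := expSeries_summable' (𝕂 := ℂ) (t • N)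
      have := ((mulVecRight (d := d) v).toContinuousLinearMap).map_tsum hsummable
      rw [exp_eq_tsum (𝕂 := ℂ)]
      calc (∑' n : ℕ, (n.factorial : ℂ)⁻¹ • (t • N) ^ n).mulVec v
          = (mulVecRight (d := d) v).toContinuousLinearMap (∑' n : ℕ, (n.factorial : ℂ)⁻¹ • (t • N) ^ n) := rfl
        _ = ∑' n : ℕ, (mulVecRight (d := d) v).toContinuousLinearMap ((n.factorial : ℂ)⁻¹ • (t • N) ^ n) := this
        _ = ∑' n : ℕ, (n.factorial : ℂ)⁻¹ • ((t • N) ^ n).mulVec v := by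
            congr 1; funext n
            simp [mulVecRight, Matrix.smul_mulVec]
    rw [hsum]
    rw [tsum_eq_sum (s := Finset.range k) ?h]
    case h =>
      intro n hn
      rw [smul_pow, Matrix.smul_mulVec, hNzero n (by simpa using hn)]
      simp
    rw [Finset.smul_sum]
    refine Finset.sum_congr rfl fun n _ => ?_
    rw [smul_pow, Matrix.smul_mulVec]
    module
  -- conclude tendsto
  have : Tendsto (fun t : ℝ => ∑ n ∈ Finset.range k,
      Complex.exp ((t : ℂ) * μ) • ((t ^ n : ℝ) • ((n.factorial : ℂ)⁻¹ • (N ^ n).mulVec v)))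
      atTop (𝓝 0) := by
    have : (0 : Fin d → ℂ) = ∑ n ∈ Finset.range k, (0 : Fin d → ℂ) := by simp
    rw [this]
    refine tendsto_finset_sum _ fun n _ => ?_
    set w : Fin d → ℂ := (n.factorial : ℂ)⁻¹ • (N ^ n).mulVec v with hw
    have hnorm : ∀ t : ℝ, ‖Complex.exp ((t : ℂ) * μ) • ((t ^ n : ℝ) • w)‖
        ≤ ‖w‖ * (|t| ^ n * Real.exp (t * μ.re)) := by
      intro t
      rw [norm_smul, norm_smul, Complex.norm_exp]
      have : ((t : ℂ) * μ).re = t * μ.re := by simp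
      rw [this, Real.norm_eq_abs, abs_pow]
      ring_nf
      exact le_of_eq (by ring)
    apply squeeze_zero_norm hnorm
    have hb : (0 : ℝ) < -μ.re := by linarith
    have base : Tendsto (fun s : ℝ => s ^ n * Real.exp (-s)) atTop (𝓝 0) :=
      Real.tendsto_pow_mul_exp_neg_atTop_nhds_zero n
    have comp : Tendsto (fun t : ℝ => ((-μ.re) * t) ^ n * Real.exp (-((-μ.re) * t)))
        atTop (𝓝 0) := base.comp (tendsto_const_mul_atTop_of_pos hb |>.mpr tendsto_id)
    have : Tendsto (fun t : ℝ => ‖w‖ * ((-μ.re)⁻¹ ^ n * (((-μ.re) * t) ^ n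
        * Real.exp (-((-μ.re) * t))))) atTop (𝓝 0) := by
      have := comp.const_mul ((-μ.re)⁻¹ ^ n)
      have := this.const_mul ‖w‖
      simpa using this
    apply this.congr'
    filter_upwards [eventually_ge_atTop (0:ℝ)] with t ht
    have habs : |t| = t := abs_of_nonneg ht
    have hc : (-μ.re) ^ n ≠ 0 := pow_ne_zero _ (ne_of_gt hb)
    have h2 : -(-μ.re * t) = t * μ.re := by ring
    rw [habs, mul_pow, h2]
    have hcc : (-μ.re)⁻¹ ^ n * (-μ.re) ^ n = 1 := by
      rw [← mul_pow, inv_mul_cancel₀ (ne_of_gt hb), one_pow]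
    linear_combination (‖w‖ * t ^ n * Real.exp (t * μ.re)) * hcc
  refine Tendsto.congr (fun t => (key t).symm) this


theorem exp_map_algebraMap (A : Matrix (Fin d) (Fin d) ℝ) :
    (exp A).map (algebraMap ℝ ℂ) = exp (A.map (algebraMap ℝ ℂ)) := by
  have hc : Continuous ((algebraMap ℝ ℂ).mapMatrix :
      Matrix (Fin d) (Fin d) ℝ →+* Matrix (Fin d) (Fin d) ℂ) := by
    show Continuous fun M : Matrix (Fin d) (Fin d) ℝ => M.map (algebraMap ℝ ℂ)
    exact Continuous.matrix_map continuous_id Complex.continuous_ofReal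
  have := map_exp ((algebraMap ℝ ℂ).mapMatrix) hc A
  simp only [RingHom.mapMatrix_apply] at this
  exact this

theorem mulVec_map_ofReal (M : Matrix (Fin d) (Fin d) ℝ) (x : Fin d → ℝ) :
    (M.map (algebraMap ℝ ℂ)).mulVec (fun i => (x i : ℂ)) = fun i => ((M.mulVec x) i : ℂ) := by
  funext i
  simp only [Matrix.mulVec, dotProduct, Matrix.map_apply]
  push_cast
  rfl

theorem smul_map_ofReal (t : ℝ) (A : Matrix (Fin d) (Fin d) ℝ) :
    (t • A).map (algebraMap ℝ ℂ) = t • (A.map (algebraMap ℝ ℂ)) := by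
  ext i j
  simp [Matrix.map_apply, Complex.real_smul]

theorem traj_tendsto_zero (A : Matrix (Fin d) (Fin d) ℝ) (hA : IsHurwitz A) (x₀ : Fin d → ℝ) :
    Tendsto (traj A x₀) atTop (𝓝 0) := by
  set B := A.map (algebraMap ℝ ℂ) with hB
  have hd := decay_complex B hA (fun i => (x₀ i : ℂ))
  have heq : ∀ t : ℝ, (exp (t • B)).mulVec (fun i => (x₀ i : ℂ))
      = fun i => ((traj A x₀ t) i : ℂ) := by
    intro t
    rw [hB, ← smul_map_ofReal, ← exp_map_algebraMap, mulVec_map_ofReal]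
    rfl
  rw [tendsto_pi_nhds]
  intro i
  have h1 : Tendsto (fun t : ℝ => ((traj A x₀ t i : ℝ) : ℂ)) atTop (𝓝 0) := by
    have h2 := (tendsto_pi_nhds.mp hd) i
    refine h2.congr fun t => ?_
    rw [heq t]
  have h3 := (Complex.continuous_re.tendsto 0).comp h1
  simpa [Function.comp_def] using h3

theorem continuous_traj (A : Matrix (Fin d) (Fin d) ℝ) (x₀ : Fin d → ℝ) :
    Continuous (traj A x₀) := by
  have h1 : Continuous fun t : ℝ => t • A := continuous_id.smul continuous_const
  have h2 : Continuous (exp : Matrix (Fin d) (Fin d) ℝ → Matrix (Fin d) (Fin d) ℝ) :=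
    exp_continuous
  have h3 : Continuous fun M : Matrix (Fin d) (Fin d) ℝ => M.mulVec x₀ :=
    (mulVecRight x₀).continuous_of_finiteDimensional
  exact h3.comp (h2.comp h1)

theorem traj_zero (A : Matrix (Fin d) (Fin d) ℝ) (x₀ : Fin d → ℝ) : traj A x₀ 0 = x₀ := by
  simp [traj, zero_smul, exp_zero, Matrix.one_mulVec]

end Decay

-- ### Properties of the trajectory hull
section Hull

variable {d : ℕ} (A : Matrix (Fin d) (Fin d) ℝ) (x₀ : Fin d → ℝ)

theorem trajHull_convex : Convex ℝ (trajHull A x₀) := convex_convexHull ℝ _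

theorem traj_mem_trajHull {t : ℝ} (ht : 0 ≤ t) : traj A x₀ t ∈ trajHull A x₀ :=
  subset_convexHull ℝ _ (Or.inl ⟨t, ht, rfl⟩)

theorem trajHull_symm : ∀ y ∈ trajHull A x₀, -y ∈ trajHull A x₀ := by
  intro y hy
  have hS : -(traj A x₀ '' Ici (0:ℝ) ∪ -(traj A x₀ '' Ici (0:ℝ)))
      = traj A x₀ '' Ici (0:ℝ) ∪ -(traj A x₀ '' Ici (0:ℝ)) := by
    ext x
    simp only [Set.mem_neg, Set.mem_union, neg_neg]
    tauto
  have : -trajHull A x₀ = trajHull A x₀ := by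
    unfold trajHull symCo
    rw [← convexHull_neg, hS]
  rw [← this]
  exact Set.neg_mem_neg.mpr hy

theorem zero_mem_trajHull : (0 : Fin d → ℝ) ∈ trajHull A x₀ := by
  have hx : x₀ ∈ trajHull A x₀ := by
    have := traj_mem_trajHull A x₀ (le_refl (0:ℝ))
    rwa [traj_zero] at this
  have hnx : -x₀ ∈ trajHull A x₀ := trajHull_symm A x₀ _ hx
  have := (trajHull_convex A x₀) hx hnx (by norm_num : (0:ℝ) ≤ 1/2)
    (by norm_num : (0:ℝ) ≤ 1/2) (by norm_num)
  simpa [smul_neg, add_neg_cancel] using this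

theorem exists_cutTailPoint (hA : IsHurwitz A) : ∃ T, IsCutTailPoint A x₀ T := by
  have hy : (0 : Fin d → ℝ) ∈ intrinsicInterior ℝ (trajHull A x₀) :=
    zero_mem_intrinsicInterior (trajHull_convex A x₀) (trajHull_symm A x₀)
      (zero_mem_trajHull A x₀)
  have hmem : ∀ᶠ t in atTop, traj A x₀ t ∈ affineSpan ℝ (trajHull A x₀) := by
    filter_upwards [eventually_ge_atTop (0:ℝ)] with t ht
    exact subset_affineSpan ℝ _ (traj_mem_trajHull A x₀ ht)
  have hev := eventually_mem_intrinsicInterior hy (traj_tendsto_zero A hA x₀) hmem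
  obtain ⟨a, ha⟩ := eventually_atTop.mp hev
  exact ⟨max a 1, lt_of_lt_of_le one_pos (le_max_right a 1),
    fun t ht => ha t (le_trans (le_max_left a 1) ht)⟩

theorem exists_smaller_cutTailPoint {T : ℝ} (hT : IsCutTailPoint A x₀ T) :
    ∃ T', IsCutTailPoint A x₀ T' ∧ T' < T := by
  have hy := hT.2 T le_rfl
  have hf : Tendsto (traj A x₀) (𝓝 T) (𝓝 (traj A x₀ T)) :=
    (continuous_traj A x₀).tendsto T
  have hmem : ∀ᶠ t in 𝓝 T, traj A x₀ t ∈ affineSpan ℝ (trajHull A x₀) := by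
    filter_upwards [eventually_gt_nhds hT.1] with t ht
    exact subset_affineSpan ℝ _ (traj_mem_trajHull A x₀ ht.le)
  have hev := eventually_mem_intrinsicInterior hy hf hmem
  obtain ⟨ε, hε, hball⟩ := Metric.eventually_nhds_iff.mp hev
  refine ⟨max (T - ε/2) (T/2), ⟨?_, ?_⟩, ?_⟩
  · exact lt_max_of_lt_right (half_pos hT.1)
  · intro t ht
    by_cases hTt : T ≤ t
    · exact hT.2 t hTt
    · push_neg at hTt
      apply hball
      have h1 : T - ε/2 ≤ t := le_trans (le_max_left _ _) ht
      rw [Real.dist_eq, abs_sub_lt_iff]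
      constructor <;> linarith
  · apply max_lt <;> linarith [hT.1, hε]

end Hull

end Aux

/-- The set of cut tail points of a trajectory is exactly the open half-line `(T_cut(x₀), +∞)`. -/
theorem isCutTailPoint_iff_lt {d : ℕ} (A : Matrix (Fin d) (Fin d) ℝ) (hA : IsHurwitz A)
    (x₀ : Fin d → ℝ) (hx₀ : x₀ ≠ 0) :
    ∀ T : ℝ, 0 < T → (IsCutTailPoint A x₀ T ↔ Tcut A x₀ < T) := by
  intro T hTpos
  obtain ⟨T₁, hT₁⟩ := exists_cutTailPoint A x₀ hA
  have hbdd : BddBelow {T | IsCutTailPoint A x₀ T} := ⟨0, fun S hS => hS.1.le⟩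
  constructor
  · intro hT
    obtain ⟨T', hT', hT'lt⟩ := exists_smaller_cutTailPoint A x₀ hT
    exact lt_of_le_of_lt (csInf_le hbdd hT') hT'lt
  · intro h
    have hne : {T | IsCutTailPoint A x₀ T}.Nonempty := ⟨T₁, hT₁⟩
    obtain ⟨T₀, hT₀, hT₀lt⟩ := exists_lt_of_csInf_lt hne h
    exact ⟨hTpos, fun t ht => hT₀.2 t (le_trans hT₀lt.le ht)⟩
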